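/- For α < −1, ∫₀¹ dt/√(t(1−t)((α−4t)²−16t)) = ∫_{(−α−√(α²−8α))/4}^{1} dt/√((1−t)(2t+α−2)(2t²+αt+α)). -/

import Mathlib

open Real intervalIntegral

/-- For `α < −1`,
`∫₀¹ dt/√(t(1−t)((α−4t)²−16t))
  = ∫_{(−α−√(α²−8α))/4}^{1} dt/√((1−t)(2t+α−2)(2t²+αt+α))`. -/
theorem period_identity_alpha_lt_neg_one (α : ℝ) (h : α < -1) :
    ∫ t in (0 : ℝ)..1, 1 / Real.sqrt (t * (1 - t) * ((α - 4 * t) ^ 2 - 16 * t)) =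
      ∫ t in ((-α - Real.sqrt (α ^ 2 - 8 * α)) / 4)..1,
        1 / Real.sqrt ((1 - t) * (2 * t + α - 2) * (2 * t ^ 2 + α * t + α)) := by
  set c : ℝ := Real.sqrt (α ^ 2 - 8 * α) with hc_def
  have hc0 : 0 ≤ c := Real.sqrt_nonneg _
  have hc2 : c ^ 2 = α ^ 2 - 8 * α := Real.sq_sqrt (by nlinarith)
  have hcα : -α < c := by nlinarith
  set r : ℝ := (-α - c) / 4 with hr_def
  have hr0 : r < 0 := by rw [hr_def]; linarith
  have hr1 : r < 1 := by linarith
  have hrroot : 2 * r ^ 2 + α * r + α = 0 := by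
    rw [hr_def]; field_simp; nlinarith
  -- the substitution map and its derivative
  set ψ : ℝ → ℝ := fun s => (1 - s) * (2 * s + α - 2) / (2 * (2 * s + α - 1)) with hψ_def
  set ψ' : ℝ → ℝ := fun s =>
    -(((2 * s + α - 1) ^ 2 - α - 1) / (2 * (2 * s + α - 1) ^ 2)) with hψ'_def
  have hden : ∀ s : ℝ, s ≤ 1 → 2 * s + α - 1 < 0 := fun s hs => by linarith
  have hderiv : ∀ s : ℝ, 2 * s + α - 1 ≠ 0 → HasDerivAt ψ (ψ' s) s := by
    intro s hs
    have h1 : HasDerivAt (fun x : ℝ => (1 - x) * (2 * x + α - 2))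
        ((-1) * (2 * s + α - 2) + (1 - s) * 2) s := by
      exact ((hasDerivAt_id s).const_sub 1).mul
        ((((hasDerivAt_id s).const_mul 2).add_const α).sub_const 2 |>.congr_deriv (by ring))
    have h2 : HasDerivAt (fun x : ℝ => 2 * (2 * x + α - 1)) 4 s := by
      have := ((((hasDerivAt_id s).const_mul 2).add_const α).sub_const 1).const_mul 2
      simpa using this.congr_deriv (by ring)
    have h2' : (2 : ℝ) * (2 * s + α - 1) ≠ 0 := by
      intro hcon; apply hs; linarith [mul_eq_zero.mp hcon]
    have := h1.div h2 h2'
    refine this.congr_deriv ?_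
    rw [hψ'_def]
    field_simp
    ring
  have hψ'neg : ∀ s : ℝ, 2 * s + α - 1 ≠ 0 → ψ' s < 0 := by
    intro s hs
    rw [hψ'_def]
    have h1 : (0:ℝ) < (2 * s + α - 1) ^ 2 := by positivity
    have h2 : (0:ℝ) < (2 * s + α - 1) ^ 2 - α - 1 := by nlinarith
    have : 0 < ((2 * s + α - 1) ^ 2 - α - 1) / (2 * (2 * s + α - 1) ^ 2) := by positivity
    linarith
  have hcont : ContinuousOn ψ (Set.Icc r 1) := by
    intro x hx
    exact ((hderiv x (ne_of_lt (hden x hx.2))).continuousAt).continuousWithinAt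
  have hanti : StrictAntiOn ψ (Set.Icc r 1) := by
    apply strictAntiOn_of_deriv_neg (convex_Icc r 1) hcont
    intro x hx
    rw [interior_Icc] at hx
    rw [(hderiv x (ne_of_lt (hden x hx.2.le))).deriv]
    exact hψ'neg x (ne_of_lt (hden x hx.2.le))
  have hψ1 : ψ 1 = 0 := by rw [hψ_def]; norm_num
  have hψr : ψ r = 1 := by
    rw [hψ_def]
    have hd : 2 * (2 * r + α - 1) ≠ 0 := by
      have := hden r hr1.le; intro hcon; nlinarith
    show (1 - r) * (2 * r + α - 2) / (2 * (2 * r + α - 1)) = 1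
    rw [div_eq_one_iff_eq hd]
    linear_combination (-1 : ℝ) * hrroot
  have himage : ψ '' Set.Ioo r 1 = Set.Ioo 0 1 := by
    apply Set.Subset.antisymm
    · rintro t ⟨s, hs, rfl⟩
      constructor
      · rw [← hψ1]
        exact hanti (Set.mem_Icc.mpr ⟨(le_of_lt hs.1), hs.2.le⟩)
          (Set.mem_Icc.mpr ⟨hr1.le, le_refl 1⟩) hs.2
      · rw [← hψr]
        exact hanti (Set.mem_Icc.mpr ⟨le_refl r, hr1.le⟩)
          (Set.mem_Icc.mpr ⟨hs.1.le, hs.2.le⟩) hs.1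
    · intro t ht
      have := intermediate_value_Ioo' hr1.le hcont
      rw [hψ1, hψr] at this
      exact this ht
  have hinj : Set.InjOn ψ (Set.Ioo r 1) := hanti.injOn.mono Set.Ioo_subset_Icc_self
  have hderivW : ∀ x ∈ Set.Ioo r 1, HasDerivWithinAt ψ (ψ' x) (Set.Ioo r 1) x :=
    fun x hx => (hderiv x (ne_of_lt (hden x hx.2.le))).hasDerivWithinAt
  rw [intervalIntegral.integral_of_le (by norm_num : (0:ℝ) ≤ 1),
    intervalIntegral.integral_of_le hr1.le,
    MeasureTheory.integral_Ioc_eq_integral_Ioo,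
    MeasureTheory.integral_Ioc_eq_integral_Ioo,
    ← himage,
    MeasureTheory.integral_image_eq_integral_abs_deriv_smul measurableSet_Ioo hderivW hinj]
  apply MeasureTheory.setIntegral_congr_fun measurableSet_Ioo
  intro s hs
  have hes : 2 * s + α - 1 < 0 := hden s hs.2.le
  have hψ's : ψ' s < 0 := hψ'neg s (ne_of_lt hes)
  have keyQ : ψ s * (1 - ψ s) * ((α - 4 * ψ s) ^ 2 - 16 * ψ s) =
      (ψ' s) ^ 2 * ((1 - s) * (2 * s + α - 2) * (2 * s ^ 2 + α * s + α)) := by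
    rw [hψ_def, hψ'_def]
    have hne : (2 * s + α - 1) ≠ 0 := ne_of_lt hes
    have hne' : s * 2 + α - 1 ≠ 0 := by linarith
    field_simp
    ring
  simp only [smul_eq_mul]
  rw [keyQ, Real.sqrt_mul (sq_nonneg _), Real.sqrt_sq_eq_abs]
  have habs : |ψ' s| ≠ 0 := by
    rw [abs_ne_zero]; exact ne_of_lt hψ's
  rcases eq_or_ne (Real.sqrt ((1 - s) * (2 * s + α - 2) * (2 * s ^ 2 + α * s + α))) 0 with hz | hz
  · simp [hz]
  · field_simp
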